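/- Let E be a field containing 𝔽_q, σ the q-power Frobenius on E, V a finite-dimensional 𝔽_q-vector space, W ⊆ V a subspace, and τ = id ⊗ σ the semilinear endomorphism of V ⊗ E (and of (V/W) ⊗ E), with τ*M denoting the E-span of τ(M). Let J' ⊆ V/W be a line and let 𝔍 = {lines J ⊆ V whose image in V/W equals J'}. Suppose L ⊆ V ⊗ E is a finite-dimensional toy shtuka (dim L − dim(L ∩ τ*L) ≤ 1) such that: L ∩ (W ⊗ E) = 0; the image L''' of L in (V/W) ⊗ E satisfies τ*L''' ≠ L'''; and L''' ⊇ J' ⊗ E. Then there exists J ∈ 𝔍 with J ⊗ E ⊆ L. -/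

import Mathlib

open TensorProduct Module LinearMap Matrix Polynomial
set_option linter.unusedSectionVars false
set_option linter.unusedVariables false
set_option maxHeartbeats 1000000

section ToyAux
variable {F E : Type*} [Field F] [Fintype F] [Field E] [Algebra F E]
variable {X : Type*} [AddCommGroup X] [Module F X]



lemma ts_sigma_mul (σ : E →ₗ[F] E) (hσ : ∀ x : E, σ x = x ^ Fintype.card F)
    (a b : E) : σ (a * b) = σ a * σ b := by
  simp [hσ, mul_pow]

lemma ts_sigma_one (σ : E →ₗ[F] E) (hσ : ∀ x : E, σ x = x ^ Fintype.card F) :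
    σ 1 = 1 := by simp [hσ]

/-- `σ` as a ring hom. -/
noncomputable def ts_sigmaHom (σ : E →ₗ[F] E) (hσ : ∀ x : E, σ x = x ^ Fintype.card F) :
    E →+* E where
  toFun := σ
  map_one' := ts_sigma_one σ hσ
  map_mul' := ts_sigma_mul σ hσ
  map_zero' := map_zero σ
  map_add' := map_add σ

lemma ts_sigma_inj (σ : E →ₗ[F] E) (hσ : ∀ x : E, σ x = x ^ Fintype.card F) :
    Function.Injective σ := (ts_sigmaHom σ hσ).injective

lemma ts_smul (σ : E →ₗ[F] E) (hσ : ∀ x : E, σ x = x ^ Fintype.card F)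
    (c : E) (x : E ⊗[F] X) :
    rTensor X σ (c • x) = σ c • rTensor X σ x := by
  induction x using TensorProduct.induction_on with
  | zero => simp
  | tmul a v => simp [smul_tmul', ts_sigma_mul σ hσ c a]
  | add x y hx hy => simp [smul_add, hx, hy]

lemma ts_tau_tmul (σ : E →ₗ[F] E) (hσ : ∀ x : E, σ x = x ^ Fintype.card F)
    (v : X) : rTensor X σ ((1 : E) ⊗ₜ[F] v) = (1 : E) ⊗ₜ[F] v := by
  simp [ts_sigma_one σ hσ]

lemma ts_rT_inj (σ : E →ₗ[F] E) (hσ : ∀ x : E, σ x = x ^ Fintype.card F) :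
    Function.Injective (rTensor X σ) :=
  Module.Flat.rTensor_preserves_injective_linearMap σ (ts_sigma_inj σ hσ)

lemma ts_span_image_span (σ : E →ₗ[F] E) (hσ : ∀ x : E, σ x = x ^ Fintype.card F)
    (s : Set (E ⊗[F] X)) :
    Submodule.span E (rTensor X σ '' (Submodule.span E s : Set (E ⊗[F] X)))
      = Submodule.span E (rTensor X σ '' s) := by
  apply le_antisymm
  · rw [Submodule.span_le]
    rintro _ ⟨x, hx, rfl⟩
    induction hx using Submodule.span_induction with
    | mem y hy => exact Submodule.subset_span ⟨y, hy, rfl⟩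
    | zero => simp
    | add y z _ _ hy hz => rw [map_add]; exact add_mem hy hz
    | smul c y _ hy => rw [ts_smul σ hσ]; exact Submodule.smul_mem _ _ hy
  · exact Submodule.span_mono (Set.image_mono Submodule.subset_span)


lemma ts_repr_tau [FiniteDimensional F X] (σ : E →ₗ[F] E)
    (hσ : ∀ x : E, σ x = x ^ Fintype.card F)
    (b : Basis (Fin (finrank F X)) F X) (x : E ⊗[F] X) (j : Fin (finrank F X)) :
    (b.baseChange E).repr (rTensor X σ x) j = σ ((b.baseChange E).repr x j) := by
  induction x using TensorProduct.induction_on with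
  | zero => simp
  | tmul a v =>
    rw [rTensor_tmul, Basis.baseChange_repr_tmul, Basis.baseChange_repr_tmul]
    rw [← map_smul σ]
  | add x y hx hy => simp [hx, hy]

lemma ts_li [FiniteDimensional F X] (σ : E →ₗ[F] E)
    (hσ : ∀ x : E, σ x = x ^ Fintype.card F)
    {m : ℕ} (v : Fin m → E ⊗[F] X) (hv : LinearIndependent E v) :
    LinearIndependent E (rTensor X σ ∘ v) := by
  classical
  set n := finrank F X
  let b : Basis (Fin n) F X := Module.finBasis F X
  let bE : Basis (Fin n) E (E ⊗[F] X) := b.baseChange E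
  set C : Matrix (Fin m) (Fin n) E := fun i j => bE.repr (v i) j with hC
  -- rows of C are linearly independent
  have hrows : LinearIndependent E (fun i => C i) := by
    have h1 : LinearIndependent E (fun i => bE.equivFun (v i)) :=
      hv.map' bE.equivFun.toLinearMap bE.equivFun.ker
    convert h1 using 2
    rfl
  have hrank : C.rank = m := by
    simpa using hrows.rank_matrix
  have hspan : Submodule.span E (Set.range Cᵀ) = ⊤ := by
    apply Submodule.eq_top_of_finrank_eq
    rw [show Set.range Cᵀ = Set.range C.col from rfl, ← Matrix.rank_eq_finrank_span_cols, hrank]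
    simp
  obtain ⟨bs, hbsub, hbspan, hbli⟩ := exists_linearIndependent E (Set.range Cᵀ)
  rw [hspan] at hbspan
  let Bb : Basis ↥bs E (Fin m → E) := Basis.mk hbli (by rw [Subtype.range_coe, hbspan])
  haveI : Fintype ↥bs := FiniteDimensional.fintypeBasisIndex Bb
  have hcard : Fintype.card ↥bs = m := by
    have := Module.finrank_eq_card_basis Bb
    rw [Module.finrank_fin_fun] at this
    omega
  let e : Fin m ≃ ↥bs := (Fintype.equivFinOfCardEq hcard).symm
  have hex : ∀ k : Fin m, ∃ j, Cᵀ j = ((e k : Fin m → E)) := fun k => hbsub (e k).2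
  choose g hg using hex
  let D : Matrix (Fin m) (Fin m) E := C.submatrix _root_.id g
  have hDcols : LinearIndependent E (fun k => Dᵀ k) := by
    have : (fun k => Dᵀ k) = (Subtype.val ∘ ⇑e) := by
      funext k
      rw [Function.comp_apply, ← hg k]
      rfl
    rw [this]
    exact hbli.comp (⇑e) e.injective
  have hD : IsUnit D := Matrix.linearIndependent_cols_iff_isUnit.mp hDcols
  have hDdet : IsUnit D.det := (Matrix.isUnit_iff_isUnit_det D).mp hD
  -- the twisted matrix
  let σ' : E →+* E := ts_sigmaHom σ hσ
  have hDσdet : IsUnit ((D.map σ').det) := by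
    rw [show (D.map ⇑σ') = σ'.mapMatrix D from rfl, ← RingHom.map_det]
    exact isUnit_iff_ne_zero.mpr (fun h => hDdet.ne_zero (σ'.injective (by simpa using h)))
  have hDσ : IsUnit (D.map σ') := (Matrix.isUnit_iff_isUnit_det _).mpr hDσdet
  -- now prove independence
  rw [Fintype.linearIndependent_iff]
  intro a ha
  have hcoord : ∀ j, (∑ i, a i * σ (C i j)) = 0 := by
    intro j
    have := congrArg (fun z => bE.repr z j) ha
    simp only [map_sum, map_smul, Finsupp.coe_finset_sum, Finset.sum_apply, Finsupp.smul_apply, smul_eq_mul, map_zero, Finsupp.zero_apply] at this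
    rw [← this]; refine Finset.sum_congr rfl fun i _ => ?_
    exact congrArg _ (ts_repr_tau σ hσ b _ _).symm
  have hvm : Matrix.vecMul a (D.map σ') = 0 := by
    funext k
    have : Matrix.vecMul a (D.map σ') k = ∑ i, a i * σ (C i (g k)) := by
      simp [Matrix.vecMul, dotProduct, D, Matrix.map, Matrix.submatrix]
      rfl
    rw [this, hcoord (g k)]
    simp
  have hzero : a = 0 := by
    apply Matrix.vecMul_injective_iff_isUnit.mpr hDσ
    show Matrix.vecMul a (D.map ⇑σ') = Matrix.vecMul 0 (D.map ⇑σ')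
    rw [hvm, Matrix.zero_vecMul]
  intro i
  rw [hzero]
  rfl

lemma ts_finrank_tau [FiniteDimensional F X] (σ : E →ₗ[F] E)
    (hσ : ∀ x : E, σ x = x ^ Fintype.card F) (N : Submodule E (E ⊗[F] X)) :
    finrank E (Submodule.span E (rTensor X σ '' (N : Set (E ⊗[F] X)))) = finrank E N := by
  classical
  set m := finrank E N with hm
  haveI : Module.Free E N := Module.Free.of_divisionRing E N
  let bN : Basis (Fin m) E N := finBasis E N
  let v : Fin m → E ⊗[F] X := fun i => (bN i : E ⊗[F] X)
  have hvli : LinearIndependent E v :=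
    bN.linearIndependent.map_injOn N.subtype N.injective_subtype.injOn
  have hspanv : Submodule.span E (Set.range v) = N := by
    have h1 : Set.range v = N.subtype '' Set.range bN := by
      rw [← Set.range_comp]; rfl
    rw [h1, ← Submodule.map_span, bN.span_eq, Submodule.map_top, Submodule.range_subtype]
  have h2 : Submodule.span E (rTensor X σ '' (N : Set (E ⊗[F] X)))
      = Submodule.span E (rTensor X σ '' Set.range v) := by
    conv_lhs => rw [← hspanv]
    rw [ts_span_image_span σ hσ]
  rw [h2, ← Set.range_comp]
  have hli2 := ts_li σ hσ v hvli
  rw [finrank_span_eq_card hli2, Fintype.card_fin]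

section Helpers
variable {M N : Type*} [AddCommGroup M] [Module E M] [AddCommGroup N] [Module E N]

lemma ts_finrank_map_add [FiniteDimensional E M] (f : M →ₗ[E] N) (p : Submodule E M) :
    finrank E (Submodule.map f p) + finrank E (LinearMap.ker (f ∘ₗ p.subtype))
      = finrank E p := by
  have h := LinearMap.finrank_range_add_finrank_ker (f ∘ₗ p.subtype)
  rwa [LinearMap.range_comp, Submodule.range_subtype] at h

lemma ts_ker_comp_bot (f : M →ₗ[E] N) (p : Submodule E M)
    (h : LinearMap.ker f ⊓ p = ⊥) : LinearMap.ker (f ∘ₗ p.subtype) = ⊥ := by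
  rw [eq_bot_iff]
  rintro ⟨x, hxp⟩ hx
  have : x ∈ LinearMap.ker f ⊓ p :=
    ⟨by simpa using hx, hxp⟩
  rw [h] at this
  simpa using this

lemma ts_finrank_map_eq [FiniteDimensional E M] (f : M →ₗ[E] N) (p : Submodule E M)
    (h : LinearMap.ker f ⊓ p = ⊥) :
    finrank E (Submodule.map f p) = finrank E p := by
  have := ts_finrank_map_add f p
  rw [ts_ker_comp_bot f p h] at this
  simpa using this

lemma ts_disjoint_of_finrank_map_eq [FiniteDimensional E M] (f : M →ₗ[E] N)
    (p : Submodule E M) (h : finrank E (Submodule.map f p) = finrank E p) :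
    LinearMap.ker f ⊓ p = ⊥ := by
  have hadd := ts_finrank_map_add f p
  rw [h] at hadd
  have hker : finrank E (LinearMap.ker (f ∘ₗ p.subtype)) = 0 := by omega
  have hbot : LinearMap.ker (f ∘ₗ p.subtype) = ⊥ := by
    rwa [Submodule.finrank_eq_zero] at hker
  rw [eq_bot_iff]
  rintro x ⟨hxf, hxp⟩
  have : (⟨x, hxp⟩ : p) ∈ LinearMap.ker (f ∘ₗ p.subtype) := by
    simpa using hxf
  rw [hbot] at this
  simpa using this

end Helpers

lemma ts_one_tmul_ne_zero {u : X} (hu : u ≠ 0) : (1 : E) ⊗ₜ[F] u ≠ 0 := by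
  intro h
  have hg : Function.Injective (LinearMap.toSpanSingleton F X u) := by
    intro a b hab
    simp only [LinearMap.toSpanSingleton_apply] at hab
    have : (a - b) • u = 0 := by rw [sub_smul, hab, sub_self]
    rcases smul_eq_zero.mp this with h' | h'
    · exact sub_eq_zero.mp h'
    · exact absurd h' hu
  have hinj : Function.Injective (lTensor E (LinearMap.toSpanSingleton F X u)) :=
    Module.Flat.lTensor_preserves_injective_linearMap _ hg
  have h1 : lTensor E (LinearMap.toSpanSingleton F X u) ((1 : E) ⊗ₜ[F] (1 : F)) = 0 := by
    simp [h]
  have h2 : ((1 : E) ⊗ₜ[F] (1 : F)) = (0 : E ⊗[F] F) := by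
    apply hinj
    simpa using h1
  have := congrArg (TensorProduct.rid F E) h2
  simp at this

lemma ts_mem_of_tmul_mem {u : X} {p : Submodule F X}
    (h : (1 : E) ⊗ₜ[F] u ∈ Submodule.span E ((fun v => (1 : E) ⊗ₜ[F] v) '' (p : Set X))) :
    u ∈ p := by
  by_contra hup
  have hker : Submodule.span E ((fun v => (1 : E) ⊗ₜ[F] v) '' (p : Set X))
      ≤ LinearMap.ker ((p.mkQ).baseChange E) := by
    rw [Submodule.span_le]
    rintro _ ⟨w, hw, rfl⟩
    simp [LinearMap.mem_ker, (Submodule.Quotient.mk_eq_zero p).mpr hw]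
  have h0 : ((p.mkQ).baseChange E) ((1 : E) ⊗ₜ[F] u) = 0 := hker h
  rw [LinearMap.baseChange_tmul] at h0
  exact ts_one_tmul_ne_zero (by simpa [Submodule.Quotient.mk_eq_zero] using hup) h0

lemma ts_ker_baseChange (W : Submodule F X) :
    LinearMap.ker ((W.mkQ).baseChange E)
      = Submodule.span E ((fun v => (1 : E) ⊗ₜ[F] v) '' (W : Set X)) := by
  apply le_antisymm
  · intro x hx
    have hex : Function.Exact (lTensor E W.subtype) (lTensor E W.mkQ) :=
      Module.Flat.lTensor_exact E (LinearMap.exact_subtype_mkQ W)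
    have hx0 : lTensor E W.mkQ x = 0 := by
      have := (LinearMap.mem_ker).mp hx
      rwa [LinearMap.baseChange_eq_ltensor] at this
    obtain ⟨y, hy⟩ := (hex x).mp hx0
    have hr : ∀ y : E ⊗[F] W, lTensor E W.subtype y
        ∈ Submodule.span E ((fun v => (1 : E) ⊗ₜ[F] v) '' (W : Set X)) := by
      intro y
      induction y using TensorProduct.induction_on with
      | zero => simp
      | tmul a w =>
        have : lTensor E W.subtype (a ⊗ₜ[F] w) = a • ((1 : E) ⊗ₜ[F] (w : X)) := by
          simp [smul_tmul']
        rw [this]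
        exact Submodule.smul_mem _ _ (Submodule.subset_span ⟨w, w.2, rfl⟩)
      | add y z hy hz => rw [map_add]; exact add_mem hy hz
    rw [← hy]
    exact hr y
  · rw [Submodule.span_le]
    rintro _ ⟨w, hw, rfl⟩
    simp [LinearMap.mem_ker, (Submodule.Quotient.mk_eq_zero W).mpr hw]


lemma ts_fixed_scalar (c : E) (hc : c ^ Fintype.card F = c) :
    ∃ d : F, algebraMap F E d = c := by
  classical
  set q := Fintype.card F with hq
  have hq2 : 2 ≤ q := Fintype.one_lt_card
  set p : E[X] := X ^ q - X with hp
  have hpne : p ≠ 0 := by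
    intro h
    have : p.coeff q = 0 := by rw [h]; simp
    rw [hp] at this
    rw [coeff_sub, coeff_X_pow, coeff_X, if_pos rfl, if_neg (by omega : ¬ (1:ℕ) = q)] at this
    norm_num at this
  have hdeg : p.natDegree ≤ q := by
    refine le_trans (natDegree_sub_le _ _) ?_
    simp [natDegree_X_pow, natDegree_X]
    omega
  set T : Finset E := Finset.image (algebraMap F E) Finset.univ with hT
  have hTcard : T.card = q := by
    rw [hT, Finset.card_image_of_injective _ (algebraMap F E).injective, Finset.card_univ]
  have hTsub : T ⊆ p.roots.toFinset := by
    intro x hx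
    rw [hT, Finset.mem_image] at hx
    obtain ⟨d, _, rfl⟩ := hx
    rw [Multiset.mem_toFinset, mem_roots hpne]
    rw [IsRoot, hp]
    simp only [eval_sub, eval_pow, eval_X]
    rw [← map_pow, FiniteField.pow_card, sub_self]
  have hrc : p.roots.toFinset.card ≤ q :=
    le_trans (Multiset.toFinset_card_le _) (le_trans (card_roots' p) hdeg)
  have hTeq : T = p.roots.toFinset :=
    Finset.eq_of_subset_of_card_le hTsub (by omega)
  have hcmem : c ∈ p.roots.toFinset := by
    rw [Multiset.mem_toFinset, mem_roots hpne]
    rw [IsRoot, hp]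
    simp [hc]
  rw [← hTeq, hT, Finset.mem_image] at hcmem
  obtain ⟨d, _, hd⟩ := hcmem
  exact ⟨d, hd⟩


lemma ts_span_tmul_span (u : X) :
    Submodule.span E ((fun v => (1 : E) ⊗ₜ[F] v) '' ((Submodule.span F {u} : Submodule F X) : Set X))
      = Submodule.span E {(1 : E) ⊗ₜ[F] u} := by
  apply le_antisymm
  · rw [Submodule.span_le]
    rintro _ ⟨x, hx, rfl⟩
    obtain ⟨c, rfl⟩ := Submodule.mem_span_singleton.mp hx
    show (1 : E) ⊗ₜ[F] (c • u) ∈ Submodule.span E {(1 : E) ⊗ₜ[F] u}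
    have h : (1 : E) ⊗ₜ[F] (c • u) = algebraMap F E c • ((1 : E) ⊗ₜ[F] u) := by
      rw [tmul_smul, algebraMap_smul]
    rw [h]
    exact Submodule.smul_mem _ _ (Submodule.mem_span_singleton_self _)
  · rw [Submodule.span_le, Set.singleton_subset_iff]
    exact Submodule.subset_span ⟨u, Submodule.mem_span_singleton_self u, rfl⟩

lemma ts_descend [FiniteDimensional F X] (σ : E →ₗ[F] E)
    (hσ : ∀ x : E, σ x = x ^ Fintype.card F)
    (L' : Submodule E (E ⊗[F] X)) (hfr : finrank E L' = 1)
    (hτ : ∀ x ∈ L', rTensor X σ x ∈ L') :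
    ∃ u : X, u ≠ 0 ∧ L' = Submodule.span E {(1 : E) ⊗ₜ[F] u} := by
  classical
  set b : Basis (Fin (finrank F X)) F X := finBasis F X with hb
  set bE : Basis (Fin (finrank F X)) E (E ⊗[F] X) := b.baseChange E with hbE
  have hne : L' ≠ ⊥ := by
    intro h
    rw [h, finrank_bot] at hfr
    omega
  obtain ⟨y, hyL, hy0⟩ := Submodule.exists_mem_ne_zero_of_ne_bot hne
  have hj0 : ∃ j0, bE.repr y j0 ≠ 0 := by
    by_contra hall
    push_neg at hall
    apply hy0
    have : bE.repr y = 0 := Finsupp.ext hall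
    have := congrArg bE.repr.symm this
    simpa using this
  obtain ⟨j0, hj0⟩ := hj0
  set z : E ⊗[F] X := (bE.repr y j0)⁻¹ • y with hz
  have hzL : z ∈ L' := Submodule.smul_mem _ _ hyL
  have hzj0 : bE.repr z j0 = 1 := by
    rw [hz, _root_.map_smul, Finsupp.smul_apply, smul_eq_mul, inv_mul_cancel₀ hj0]
  have hz0 : z ≠ 0 := by
    intro h
    rw [h] at hzj0
    simp at hzj0
  have hspan : Submodule.span E {z} = L' := by
    apply Submodule.eq_of_le_of_finrank_le
    · rw [Submodule.span_le, Set.singleton_subset_iff]; exact hzL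
    · rw [hfr, finrank_span_singleton hz0]
  have hτz : rTensor X σ z ∈ Submodule.span E {z} := by rw [hspan]; exact hτ z hzL
  obtain ⟨c, hc⟩ := Submodule.mem_span_singleton.mp hτz
  have hcoord : ∀ j, σ (bE.repr z j) = c * bE.repr z j := by
    intro j
    have := congrArg (fun w => bE.repr w j) hc
    simp only [_root_.map_smul, Finsupp.smul_apply, smul_eq_mul] at this
    rw [this, ts_repr_tau σ hσ b]
  have hc1 : c = 1 := by
    have := hcoord j0
    rw [hzj0, mul_one, ts_sigma_one σ hσ] at this
    exact this.symm
  have hfix : ∀ j, (bE.repr z j) ^ Fintype.card F = bE.repr z j := by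
    intro j
    have := hcoord j
    rw [hc1, one_mul, hσ] at this
    exact this
  choose d hd using fun j => ts_fixed_scalar (bE.repr z j) (hfix j)
  set u : X := ∑ j, d j • b j with hu
  have hzu : z = (1 : E) ⊗ₜ[F] u := by
    conv_lhs => rw [← bE.sum_repr z]
    rw [hu, tmul_sum]
    apply Finset.sum_congr rfl
    intro j _
    rw [← hd j, hbE, Basis.baseChange_apply, tmul_smul, algebraMap_smul]
  have hu0 : u ≠ 0 := by
    intro h
    apply hz0
    rw [hzu, h, tmul_zero]
  exact ⟨u, hu0, by rw [← hspan, hzu]⟩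


end ToyAux

open TensorProduct Module

/-- If a toy shtuka `L` meets `W ⊗ E` trivially, induces a nontrivial toy shtuka on
`(V/W) ⊗ E`, and its image contains `J' ⊗ E` for a line `J' ⊆ V/W`, then `L` contains
`J ⊗ E` for some line `J ⊆ V` lifting `J'`. -/
theorem toy_shtuka_contains_line_lift
    {F E : Type*} [Field F] [Fintype F] [Field E] [Algebra F E]
    {V : Type*} [AddCommGroup V] [Module F V] [FiniteDimensional F V]
    (σ : E →ₗ[F] E) (hσ : ∀ x : E, σ x = x ^ Fintype.card F)
    (W : Submodule F V) (J' : Submodule F (V ⧸ W)) (hJ' : finrank F ↥J' = 1)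
    (L : Submodule E (E ⊗[F] V))
    (hL : finrank E ↥L -
        finrank E ↥(L ⊓ Submodule.span E
          (⇑(LinearMap.rTensor V σ) '' (L : Set (E ⊗[F] V)))) ≤ 1)
    (hzero : L ⊓ Submodule.span E ((fun v => (1 : E) ⊗ₜ[F] v) '' (W : Set V)) = ⊥)
    (hnt : Submodule.span E (⇑(LinearMap.rTensor (V ⧸ W) σ) ''
        ((Submodule.map ((W.mkQ).baseChange E) L) : Set (E ⊗[F] (V ⧸ W))))
      ≠ Submodule.map ((W.mkQ).baseChange E) L)
    (hcontain : Submodule.span E ((fun x => (1 : E) ⊗ₜ[F] x) '' (J' : Set (V ⧸ W)))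
      ≤ Submodule.map ((W.mkQ).baseChange E) L) :
    ∃ J : Submodule F V, finrank F ↥J = 1 ∧ Submodule.map W.mkQ J = J' ∧
      Submodule.span E ((fun v => (1 : E) ⊗ₜ[F] v) '' (J : Set V)) ≤ L := by
  classical
  haveI : FiniteDimensional E (E ⊗[F] V) := inferInstance
  haveI : FiniteDimensional E (E ⊗[F] (V ⧸ W)) := inferInstance
  set π : E ⊗[F] V →ₗ[E] E ⊗[F] (V ⧸ W) := (W.mkQ).baseChange E with hπdef
  have hcomm : ∀ x : E ⊗[F] V,
      π (LinearMap.rTensor V σ x) = LinearMap.rTensor (V ⧸ W) σ (π x) := by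
    intro x
    induction x using TensorProduct.induction_on with
    | zero => simp
    | tmul a v => simp [hπdef]
    | add x y hx hy => simp only [map_add, hx, hy]
  have hmapτ : ∀ N : Submodule E (E ⊗[F] V),
      Submodule.map π (Submodule.span E (LinearMap.rTensor V σ '' (N : Set (E ⊗[F] V))))
        = Submodule.span E (LinearMap.rTensor (V ⧸ W) σ ''
            ((Submodule.map π N : Submodule E (E ⊗[F] (V ⧸ W))) : Set (E ⊗[F] (V ⧸ W)))) := by
    intro N
    rw [Submodule.map_span]
    congr 1
    rw [Submodule.map_coe, ← Set.image_comp, ← Set.image_comp]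
    exact Set.image_congr' hcomm
  have hdisj : LinearMap.ker π ⊓ L = ⊥ := by
    rw [hπdef, ts_ker_baseChange W, inf_comm]
    exact hzero
  set n := finrank E L with hn
  set L3 : Submodule E (E ⊗[F] (V ⧸ W)) := Submodule.map π L with hL3
  have hfrL3 : finrank E L3 = n := ts_finrank_map_eq π L hdisj
  set S3 : Submodule E (E ⊗[F] (V ⧸ W)) :=
    Submodule.span E (LinearMap.rTensor (V ⧸ W) σ '' (L3 : Set (E ⊗[F] (V ⧸ W)))) with hS3
  have hS3fr : finrank E S3 = n := by rw [hS3, ts_finrank_tau σ hσ L3, hfrL3]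
  have hinfneq : L3 ⊓ S3 ≠ L3 := by
    intro h
    have hle : L3 ≤ S3 := inf_eq_left.mp h
    have heq : L3 = S3 := Submodule.eq_of_le_of_finrank_le hle (by rw [hS3fr, hfrL3])
    exact hnt heq.symm
  have hinflt : finrank E ↥(L3 ⊓ S3) < n := by
    have := Submodule.finrank_lt_finrank_of_lt (lt_of_le_of_ne inf_le_left hinfneq)
    rwa [hfrL3] at this
  set Mm : Submodule E (E ⊗[F] V) :=
    L ⊓ Submodule.span E (LinearMap.rTensor V σ '' (L : Set (E ⊗[F] V))) with hMm
  have hMle : Mm ≤ L := inf_le_left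
  have hMub : finrank E Mm ≤ n := hn ▸ Submodule.finrank_mono hMle
  have hMfr : n ≤ finrank E Mm + 1 := by omega
  have hmapMm : Submodule.map π Mm ≤ L3 ⊓ S3 := by
    refine le_trans (Submodule.map_inf_le π) ?_
    rw [hmapτ L]
  have hdisjMm : LinearMap.ker π ⊓ Mm = ⊥ := by
    rw [eq_bot_iff, ← hdisj]
    exact inf_le_inf_left _ hMle
  have hfrmapMm : finrank E (Submodule.map π Mm) = finrank E Mm :=
    ts_finrank_map_eq π Mm hdisjMm
  have hsq : Submodule.map π Mm = L3 ⊓ S3 := by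
    apply Submodule.eq_of_le_of_finrank_le hmapMm
    have h1 := Submodule.finrank_mono hmapMm
    omega
  set J'E : Submodule E (E ⊗[F] (V ⧸ W)) :=
    Submodule.span E ((fun x => (1 : E) ⊗ₜ[F] x) '' (J' : Set (V ⧸ W))) with hJ'E
  have hJle3 : J'E ≤ L3 := hcontain
  have hJleS3 : J'E ≤ S3 := by
    rw [hJ'E, Submodule.span_le]
    rintro _ ⟨x, hx, rfl⟩
    have h1 : (1 : E) ⊗ₜ[F] x ∈ L3 := hcontain (Submodule.subset_span ⟨x, hx, rfl⟩)
    have h2 : LinearMap.rTensor (V ⧸ W) σ ((1 : E) ⊗ₜ[F] x) = (1 : E) ⊗ₜ[F] x :=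
      ts_tau_tmul σ hσ x
    rw [hS3]
    show (1 : E) ⊗ₜ[F] x ∈ Submodule.span E _
    rw [← h2]
    exact Submodule.subset_span ⟨_, h1, rfl⟩
  have hJleM : J'E ≤ Submodule.map π Mm := by
    rw [hsq]
    exact le_inf hJle3 hJleS3
  set L' : Submodule E (E ⊗[F] V) := L ⊓ Submodule.comap π J'E with hL'
  have hL'leL : L' ≤ L := inf_le_left
  have hL'leMm : L' ≤ Mm := by
    rintro x ⟨hxL, hxJ⟩
    obtain ⟨mm, hmm, hpmm⟩ := hJleM hxJ
    have hsub : x - mm ∈ LinearMap.ker π ⊓ L :=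
      Submodule.mem_inf.mpr ⟨LinearMap.mem_ker.mpr (by rw [map_sub, hpmm, sub_self]),
        sub_mem hxL (hMle hmm)⟩
    rw [hdisj] at hsub
    have hx : x = mm := by
      have := sub_eq_zero.mp ((Submodule.mem_bot E).mp hsub)
      exact this
    rw [hx]
    exact hmm
  -- generator of J'
  obtain ⟨j, hjJ', hj0, hJ'span⟩ :
      ∃ j : V ⧸ W, j ∈ J' ∧ j ≠ 0 ∧ J' = Submodule.span F {j} := by
    let bJ : Basis (Fin 1) F J' := finBasisOfFinrankEq F J' hJ'
    refine ⟨(bJ 0 : V ⧸ W), (bJ 0).2, by simpa using bJ.ne_zero 0, ?_⟩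
    have h1 : Set.range (fun i : Fin 1 => ((bJ i : V ⧸ W))) = {(bJ 0 : V ⧸ W)} := by
      rw [Set.range_unique]
      rw [show (default : Fin 1) = 0 from rfl]
    have h2 : Set.range (fun i : Fin 1 => ((bJ i : V ⧸ W))) = J'.subtype '' Set.range bJ := by
      rw [← Set.range_comp]; rfl
    rw [← h1, h2, ← Submodule.map_span, bJ.span_eq, Submodule.map_top, Submodule.range_subtype]
  have h1j : (1 : E) ⊗ₜ[F] j ∈ J'E := Submodule.subset_span ⟨j, hjJ', rfl⟩
  have h1jne : (1 : E) ⊗ₜ[F] j ≠ (0 : E ⊗[F] (V ⧸ W)) := ts_one_tmul_ne_zero hj0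
  have hJ'Espan : J'E = Submodule.span E {(1 : E) ⊗ₜ[F] j} := by
    rw [hJ'E, hJ'span, ts_span_tmul_span]
  have hJ'Efr : finrank E J'E = 1 := by
    rw [hJ'Espan, finrank_span_singleton h1jne]
  -- L' is nonzero
  obtain ⟨x0, hx0L, hx0π⟩ := Submodule.mem_map.mp (hJle3 h1j)
  have hx0L' : x0 ∈ L' :=
    Submodule.mem_inf.mpr ⟨hx0L, Submodule.mem_comap.mpr (by rw [hx0π]; exact h1j)⟩
  have hx0ne : x0 ≠ 0 := by
    intro h
    rw [h, map_zero] at hx0π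
    exact h1jne hx0π.symm
  have hL'disj : LinearMap.ker π ⊓ L' = ⊥ := by
    rw [eq_bot_iff, ← hdisj]
    exact inf_le_inf_left _ hL'leL
  have hπL'le : Submodule.map π L' ≤ J'E := by
    rintro _ ⟨x, hx, rfl⟩
    exact hx.2
  have hfrL'le : finrank E L' ≤ 1 := by
    rw [← ts_finrank_map_eq π L' hL'disj]
    calc finrank E (Submodule.map π L') ≤ finrank E J'E := Submodule.finrank_mono hπL'le
    _ = 1 := hJ'Efr
  have hL'ne : L' ≠ ⊥ := by
    intro h
    rw [h] at hx0L'
    exact hx0ne ((Submodule.mem_bot E).mp hx0L')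
  have hfrL'pos : finrank E L' ≠ 0 := by
    intro h
    exact hL'ne (Submodule.finrank_eq_zero.mp h)
  have hfrL' : finrank E L' = 1 := by omega
  -- τ*L
  set SτL : Submodule E (E ⊗[F] V) :=
    Submodule.span E (LinearMap.rTensor V σ '' (L : Set (E ⊗[F] V))) with hSτL
  have hfrSτL : finrank E SτL = n := by rw [hSτL, ts_finrank_tau σ hσ L]
  have hmapSτL : Submodule.map π SτL = S3 := hmapτ L
  have hdisjSτL : LinearMap.ker π ⊓ SτL = ⊥ :=
    ts_disjoint_of_finrank_map_eq π SτL (by rw [hmapSτL, hS3fr, hfrSτL])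
  set P : Submodule E (E ⊗[F] V) := SτL ⊓ Submodule.comap π J'E with hP
  have hL'leP : L' ≤ P := by
    refine le_inf (le_trans hL'leMm inf_le_right) inf_le_right
  have hπPle : Submodule.map π P ≤ J'E := by
    rintro _ ⟨x, hx, rfl⟩
    exact hx.2
  have hPdisj : LinearMap.ker π ⊓ P = ⊥ := by
    rw [eq_bot_iff, ← hdisjSτL]
    exact inf_le_inf_left _ inf_le_left
  have hPfr : finrank E P ≤ 1 := by
    rw [← ts_finrank_map_eq π P hPdisj]
    calc finrank E (Submodule.map π P) ≤ finrank E J'E := Submodule.finrank_mono hπPle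
    _ = 1 := hJ'Efr
  have hPeq : L' = P := Submodule.eq_of_le_of_finrank_le hL'leP (by omega)
  -- L' is τ-stable
  have hτL' : ∀ x ∈ L', LinearMap.rTensor V σ x ∈ L' := by
    intro x hx
    rw [hPeq]
    refine Submodule.mem_inf.mpr ⟨Submodule.subset_span ⟨x, hL'leL hx, rfl⟩, ?_⟩
    rw [Submodule.mem_comap, hcomm x]
    have hπx : π x ∈ J'E := hx.2
    rw [hJ'Espan] at hπx
    obtain ⟨c, hc⟩ := Submodule.mem_span_singleton.mp hπx
    rw [← hc, ts_smul σ hσ, ts_tau_tmul σ hσ]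
    rw [hJ'Espan]
    exact Submodule.smul_mem _ _ (Submodule.mem_span_singleton_self _)
  obtain ⟨u, hu0, hL'u⟩ := ts_descend σ hσ L' hfrL' hτL'
  have h1u : (1 : E) ⊗ₜ[F] u ∈ L' := by
    rw [hL'u]
    exact Submodule.mem_span_singleton_self _
  refine ⟨Submodule.span F {u}, by rw [finrank_span_singleton hu0], ?_, ?_⟩
  · rw [Submodule.map_span, Set.image_singleton]
    have hπu : π ((1 : E) ⊗ₜ[F] u) = (1 : E) ⊗ₜ[F] (W.mkQ u) := by
      simp [hπdef]
    have hmemJ : (1 : E) ⊗ₜ[F] (W.mkQ u) ∈ J'E := by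
      rw [← hπu]
      exact h1u.2
    have humem : W.mkQ u ∈ J' := ts_mem_of_tmul_mem hmemJ
    have hune : W.mkQ u ≠ 0 := by
      intro h
      have hker : (1 : E) ⊗ₜ[F] u ∈ LinearMap.ker π ⊓ L :=
        Submodule.mem_inf.mpr ⟨LinearMap.mem_ker.mpr (by rw [hπu, h, tmul_zero]),
          hL'leL h1u⟩
      rw [hdisj] at hker
      exact ts_one_tmul_ne_zero hu0 ((Submodule.mem_bot E).mp hker)
    apply Submodule.eq_of_le_of_finrank_le
    · rw [Submodule.span_le, Set.singleton_subset_iff]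
      exact humem
    · rw [hJ', finrank_span_singleton hune]
  · rw [ts_span_tmul_span, ← hL'u]
    exact hL'leL
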